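/- The factor 1/2 in the star-decomposition lemma is tight: for every n ≥ 1, consider the tree with 2n+1 vertices in which a root has n children and each child has exactly one further child, with all 2n edges having weight 1. Then any subgraph that is a vertex-disjoint union of stars has total edge weight at most n+1, while the tree has total weight 2n. -/

import Mathlib

open Set

/-- A graph is a vertex-disjoint union of stars if there is a set `C` of centers such
that every edge has exactly one endpoint in `C`, and every vertex outside `C` has
degree at most one. -/
def IsStarUnion {V : Type*} (H : SimpleGraph V) : Prop :=
  ∃ C : Set V,
    (∀ a b, H.Adj a b → (a ∈ C ↔ b ∉ C)) ∧
    (∀ v, v ∉ C → ∀ a b, H.Adj v a → H.Adj v b → a = b)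

/-- The depth-2 spider: root `none`, children `some (i, false)`, grandchildren
`some (i, true)`, with edges root–child and child–grandchild. -/
def Spider (n : ℕ) : SimpleGraph (Option (Fin n × Bool)) :=
  SimpleGraph.fromRel (fun a b => ∃ i : Fin n,
    (a = none ∧ b = some (i, false)) ∨ (a = some (i, false) ∧ b = some (i, true)))

lemma spider_adj {n : ℕ} {a b : Option (Fin n × Bool)} :
    (Spider n).Adj a b ↔ a ≠ b ∧ ((∃ i : Fin n,
    (a = none ∧ b = some (i, false)) ∨ (a = some (i, false) ∧ b = some (i, true))) ∨
    (∃ i : Fin n,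
    (b = none ∧ a = some (i, false)) ∨ (b = some (i, false) ∧ a = some (i, true)))) := by
  rw [Spider, SimpleGraph.fromRel_adj]

lemma spider_edge {n : ℕ} (e : Sym2 (Option (Fin n × Bool)))
    (he : e ∈ (Spider n).edgeSet) :
    ∃ i : Fin n, e = s(none, some (i, false)) ∨ e = s(some (i, false), some (i, true)) := by
  induction e with
  | _ a b =>
    rw [SimpleGraph.mem_edgeSet, spider_adj] at he
    obtain ⟨hne, h | h⟩ := he
    · obtain ⟨i, ⟨h1, h2⟩ | ⟨h1, h2⟩⟩ := h
      · exact ⟨i, Or.inl (by rw [h1, h2])⟩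
      · exact ⟨i, Or.inr (by rw [h1, h2])⟩
    · obtain ⟨i, ⟨h1, h2⟩ | ⟨h1, h2⟩⟩ := h
      · exact ⟨i, Or.inl (by rw [h1, h2, Sym2.eq_swap])⟩
      · exact ⟨i, Or.inr (by rw [h1, h2, Sym2.eq_swap])⟩

/-- Tightness of the factor 1/2: the spider tree with 2n+1 vertices has
2n unit-weight edges, but any vertex-disjoint union of stars inside it has at most
n + 1 edges. -/
theorem star_decomposition_tight (n : ℕ) (hn : 1 ≤ n) :
    Nat.card (Spider n).edgeSet = 2 * n ∧
    ∀ H : SimpleGraph (Option (Fin n × Bool)), H ≤ Spider n → IsStarUnion H →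
      Nat.card H.edgeSet ≤ n + 1 := by
  constructor
  · have hmem : ∀ p : Fin n × Bool,
        (if p.2 then s(some (p.1, false), some ((p.1 : Fin n), true))
         else s((none : Option (Fin n × Bool)), some (p.1, false))) ∈ (Spider n).edgeSet := by
      rintro ⟨i, b⟩
      cases b <;> simp [spider_adj]
    set f : Fin n × Bool → (Spider n).edgeSet := fun p => ⟨_, hmem p⟩ with hf
    have hbij : Function.Bijective f := by
      constructor
      · rintro ⟨i, b⟩ ⟨j, c⟩ h
        simp only [hf, Subtype.mk.injEq] at h
        cases b <;> cases c <;> simp_all [Sym2.eq_iff]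
      · rintro ⟨e, he⟩
        obtain ⟨i, h | h⟩ := spider_edge e he
        · exact ⟨(i, false), by simp [hf, h]⟩
        · exact ⟨(i, true), by simp [hf, h]⟩
    have := Nat.card_eq_of_bijective f hbij
    simp only [Nat.card_eq_fintype_card, Fintype.card_prod, Fintype.card_fin,
      Fintype.card_bool] at this
    omega
  · rintro H hle ⟨C, hC1, hC2⟩
    classical
    set k : Option (Fin n × Bool) → Option (Fin n × Bool) → Option (Fin n) :=
      fun a b =>
        match a, b with
        | none, none => none
        | none, some (i, _) => if none ∈ C then some i else none
        | some (i, _), none => if none ∈ C then some i else none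
        | some (i, _), some (j, _) => some (min i j) with hk
    have hsymm : ∀ a b, k a b = k b a := by
      rintro (_ | ⟨i, bi⟩) (_ | ⟨j, bj⟩) <;> simp [hk, min_comm]
    have kroot : ∀ (i : Fin n) (b : Bool),
        k none (some (i, b)) = if none ∈ C then some i else none := fun _ _ => rfl
    have kleg : ∀ (i j : Fin n) (b b' : Bool),
        k (some (i, b)) (some (j, b')) = some (min i j) := fun _ _ _ _ => rfl
    set F : H.edgeSet → Option (Fin n) :=
      fun e => Sym2.lift ⟨k, hsymm⟩ e.1 with hF
    have hclass : ∀ e : H.edgeSet, ∃ i : Fin n,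
        (e : Sym2 _) = s(none, some (i, false)) ∨
        (e : Sym2 _) = s(some (i, false), some (i, true)) := by
      rintro ⟨e, he⟩
      exact spider_edge e (SimpleGraph.edgeSet_subset_edgeSet.2 hle he)
    have hinj : Function.Injective F := by
      rintro e1 e2 hFe
      obtain ⟨i, hi⟩ := hclass e1
      obtain ⟨j, hj⟩ := hclass e2
      have he1 := e1.2
      have he2 := e2.2
      apply Subtype.ext
      simp only [hF] at hFe
      rcases hi with hi | hi <;> rcases hj with hj | hj <;>
        rw [hi] at hFe he1 ⊢ <;> rw [hj] at hFe he2 ⊢ <;>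
        rw [Sym2.lift_mk, Sym2.lift_mk] at hFe <;>
        rw [SimpleGraph.mem_edgeSet] at he1 he2
      · -- two root edges
        replace hFe : k none (some (i, false)) = k none (some (j, false)) := hFe
        rw [kroot i false, kroot j false] at hFe
        by_cases hr : none ∈ C
        · rw [if_pos hr, if_pos hr, Option.some.injEq] at hFe
          rw [hFe]
        · have := hC2 none hr _ _ he1 he2
          simp only [Option.some.injEq, Prod.mk.injEq] at this
          rw [this.1]
      · -- root edge vs leg edge
        exfalso
        replace hFe : k none (some (i, false)) = k (some (j, false)) (some (j, true)) := hFe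
        rw [kroot i false, kleg j j false true] at hFe
        by_cases hr : none ∈ C
        · rw [if_pos hr, Option.some.injEq, min_self] at hFe
          subst hFe
          have hci : some (i, false) ∉ C := (hC1 _ _ he1).mp hr
          have := hC2 _ hci _ _ he1.symm he2
          simp at this
        · rw [if_neg hr] at hFe
          exact Option.some_ne_none _ hFe.symm
      · -- leg edge vs root edge
        exfalso
        replace hFe : k (some (i, false)) (some (i, true)) = k none (some (j, false)) := hFe
        rw [kroot j false, kleg i i false true] at hFe
        by_cases hr : none ∈ C
        · rw [if_pos hr, Option.some.injEq, min_self] at hFe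
          subst hFe
          have hcj : some (i, false) ∉ C := (hC1 _ _ he2).mp hr
          have := hC2 _ hcj _ _ he2.symm he1
          simp at this
        · rw [if_neg hr] at hFe
          exact Option.some_ne_none _ hFe
      · -- two leg edges
        replace hFe : k (some (i, false)) (some (i, true)) = k (some (j, false)) (some (j, true)) := hFe
        rw [kleg i i false true, kleg j j false true, Option.some.injEq, min_self, min_self] at hFe
        rw [hFe]
    calc Nat.card H.edgeSet ≤ Nat.card (Option (Fin n)) :=
          Nat.card_le_card_of_injective F hinj
      _ = n + 1 := by simp [Nat.card_eq_fintype_card]
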